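/- Suppose both hypotheses H1+ and H1− hold at t = a (for all sufficiently small ε > 0 each of the equations p(a,h) = a + ε and p(a,h) = a − ε has a solution h = h(a,ε) with h(a,ε) → 0 as ε → 0⁺) and the map h ↦ p(a,h) is continuous at h = 0. If the p-derivative D_p f(a) exists (as a finite limit), then f is continuous at a. -/

import Mathlib

open Filter Topology Set

/-- If both `H1⁺` and `H1⁻` hold at `t = a` (for all sufficiently small
`ε > 0` each equation `p a h = a + ε` and `p a h = a - ε` has a solution `h = h(a,ε)`
tending to `0` as `ε → 0⁺`), the map `h ↦ p a h` is continuous at `h = 0`, and the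
`p`-derivative `D_p f (a)` exists (as a finite limit `L`), then `f` is continuous at `a`. -/
theorem p_differentiable_continuous
    (p : ℝ → ℝ → ℝ) (f : ℝ → ℝ) (a L : ℝ) (hsolp hsolm : ℝ → ℝ)
    (hH1p : ∀ᶠ ε in 𝓝[>] (0 : ℝ), p a (hsolp ε) = a + ε)
    (hsolp0 : Tendsto hsolp (𝓝[>] (0 : ℝ)) (𝓝 0))
    (hH1m : ∀ᶠ ε in 𝓝[>] (0 : ℝ), p a (hsolm ε) = a - ε)
    (hsolm0 : Tendsto hsolm (𝓝[>] (0 : ℝ)) (𝓝 0))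
    (hpcont : ContinuousAt (fun h => p a h) 0)
    (hD : Tendsto (fun h => (f (p a h) - f a) / h) (𝓝[≠] (0 : ℝ)) (𝓝 L)) :
    ContinuousAt f a := by
  -- Step 1: f (p a h) - f a → 0 along 𝓝[≠] 0
  have h0 : Tendsto (fun h : ℝ => h) (𝓝[≠] (0 : ℝ)) (𝓝 0) :=
    tendsto_id.mono_left nhdsWithin_le_nhds
  have hg : Tendsto (fun h => f (p a h) - f a) (𝓝[≠] (0 : ℝ)) (𝓝 0) := by
    have hmul := hD.mul h0
    rw [mul_zero] at hmul
    refine hmul.congr' ?_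
    filter_upwards [self_mem_nhdsWithin] with h hh
    exact div_mul_cancel₀ _ hh
  -- Step 2: eventually hsolp ε ≠ 0 and hsolm ε ≠ 0
  have hnep : ∀ᶠ ε in 𝓝[>] (0 : ℝ), hsolp ε ≠ 0 := by
    have htp : Tendsto (fun ε : ℝ => a + ε) (𝓝[>] (0 : ℝ)) (𝓝 a) := by
      have : Tendsto (fun ε : ℝ => a + ε) (𝓝 (0 : ℝ)) (𝓝 (a + 0)) :=
        (continuous_const.add continuous_id).tendsto 0
      simpa using this.mono_left nhdsWithin_le_nhds
    by_cases hp0 : p a 0 = a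
    · filter_upwards [hH1p, self_mem_nhdsWithin] with ε hε hε0 h0'
      rw [h0', hp0] at hε
      have : (0:ℝ) < ε := hε0
      linarith
    · filter_upwards [hH1p, htp.eventually_ne (Ne.symm hp0)] with ε hε hne h0'
      rw [h0'] at hε
      exact hne hε.symm
  have hnem : ∀ᶠ ε in 𝓝[>] (0 : ℝ), hsolm ε ≠ 0 := by
    have htm : Tendsto (fun ε : ℝ => a - ε) (𝓝[>] (0 : ℝ)) (𝓝 a) := by
      have : Tendsto (fun ε : ℝ => a - ε) (𝓝 (0 : ℝ)) (𝓝 (a - 0)) :=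
        (continuous_const.sub continuous_id).tendsto 0
      simpa using this.mono_left nhdsWithin_le_nhds
    by_cases hp0 : p a 0 = a
    · filter_upwards [hH1m, self_mem_nhdsWithin] with ε hε hε0 h0'
      rw [h0', hp0] at hε
      have : (0:ℝ) < ε := hε0
      linarith
    · filter_upwards [hH1m, htm.eventually_ne (Ne.symm hp0)] with ε hε hne h0'
      rw [h0'] at hε
      exact hne hε.symm
  have hsolp' : Tendsto hsolp (𝓝[>] (0 : ℝ)) (𝓝[≠] (0 : ℝ)) :=
    tendsto_nhdsWithin_iff.mpr ⟨hsolp0, hnep⟩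
  have hsolm' : Tendsto hsolm (𝓝[>] (0 : ℝ)) (𝓝[≠] (0 : ℝ)) :=
    tendsto_nhdsWithin_iff.mpr ⟨hsolm0, hnem⟩
  -- Step 3: f (a + ε) → f a and f (a - ε) → f a as ε → 0⁺
  have hright : Tendsto (fun ε => f (a + ε)) (𝓝[>] (0 : ℝ)) (𝓝 (f a)) := by
    have h1 := hg.comp hsolp'
    have h2 : Tendsto (fun ε => f (p a (hsolp ε))) (𝓝[>] (0 : ℝ)) (𝓝 (f a)) := by
      have := h1.add (tendsto_const_nhds (x := f a))
      simpa using this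
    refine h2.congr' ?_
    filter_upwards [hH1p] with ε hε
    rw [hε]
  have hleft : Tendsto (fun ε => f (a - ε)) (𝓝[>] (0 : ℝ)) (𝓝 (f a)) := by
    have h1 := hg.comp hsolm'
    have h2 : Tendsto (fun ε => f (p a (hsolm ε))) (𝓝[>] (0 : ℝ)) (𝓝 (f a)) := by
      have := h1.add (tendsto_const_nhds (x := f a))
      simpa using this
    refine h2.congr' ?_
    filter_upwards [hH1m] with ε hε
    rw [hε]
  -- Step 4: transfer to 𝓝[>] a and 𝓝[<] a
  have hR : Tendsto f (𝓝[>] a) (𝓝 (f a)) := by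
    have hmap : Tendsto (fun x : ℝ => x - a) (𝓝[>] a) (𝓝[>] (0 : ℝ)) := by
      refine tendsto_nhdsWithin_of_tendsto_nhds_of_eventually_within _ ?_ ?_
      · have : Tendsto (fun x : ℝ => x - a) (𝓝 a) (𝓝 (a - a)) :=
          (continuous_id.sub continuous_const).tendsto a
        simpa using this.mono_left nhdsWithin_le_nhds
      · filter_upwards [self_mem_nhdsWithin] with x hx
        exact sub_pos.mpr (mem_Ioi.mp hx)
    have := hright.comp hmap
    refine this.congr ?_
    intro x; simp
  have hL : Tendsto f (𝓝[<] a) (𝓝 (f a)) := by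
    have hmap : Tendsto (fun x : ℝ => a - x) (𝓝[<] a) (𝓝[>] (0 : ℝ)) := by
      refine tendsto_nhdsWithin_of_tendsto_nhds_of_eventually_within _ ?_ ?_
      · have : Tendsto (fun x : ℝ => a - x) (𝓝 a) (𝓝 (a - a)) :=
          (continuous_const.sub continuous_id).tendsto a
        simpa using this.mono_left nhdsWithin_le_nhds
      · filter_upwards [self_mem_nhdsWithin] with x hx
        exact sub_pos.mpr (mem_Iio.mp hx)
    have := hleft.comp hmap
    refine this.congr ?_
    intro x; simp
  -- Step 5: combine
  have : Tendsto f (𝓝 a) (𝓝 (f a)) := by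
    rw [← nhdsLT_sup_nhdsGE (a := a)]
    refine Tendsto.sup hL ?_
    have : 𝓝[≥] a = 𝓝[{a}] a ⊔ 𝓝[>] a := by
      rw [← nhdsWithin_union]
      congr 1
      ext x
      simp [le_iff_lt_or_eq, or_comm, eq_comm]
    rw [this]
    refine Tendsto.sup ?_ hR
    have : 𝓝[{a}] a = pure a := nhdsWithin_singleton a
    rw [this]
    simpa using tendsto_pure_nhds f a
  exact this
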